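/- Let A be an n×n real matrix. If the rank of A equals the number of nonzero eigenvalues of A counted with algebraic multiplicity, and all the nonzero eigenvalues of A are pairwise distinct, then A is diagonalizable over the complex numbers. -/

import Mathlib

open Polynomial Module Matrix

lemma mulVec_map_ofReal {n : ℕ} (A : Matrix (Fin n) (Fin n) ℝ) (x y : Fin n → ℝ) :
    (A.map Complex.ofReal).mulVec (fun i => (x i : ℂ) + (y i : ℂ) * Complex.I)
      = fun i => ((A.mulVec x i : ℝ) : ℂ) + ((A.mulVec y i : ℝ) : ℂ) * Complex.I := by
  funext i
  simp only [mulVec, dotProduct, Matrix.map_apply, mul_add, Finset.sum_add_distrib,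
    ← mul_assoc, ← Finset.sum_mul, ← Complex.ofReal_mul, ← Complex.ofReal_sum]

lemma ker_mem_iff {n : ℕ} (A : Matrix (Fin n) (Fin n) ℝ) (z : Fin n → ℂ) :
    z ∈ LinearMap.ker (A.map Complex.ofReal).mulVecLin ↔
      ((fun i => (z i).re) ∈ LinearMap.ker A.mulVecLin ∧
       (fun i => (z i).im) ∈ LinearMap.ker A.mulVecLin) := by
  have hz : z = fun i => ((z i).re : ℂ) + ((z i).im : ℂ) * Complex.I := by
    funext i; simp [Complex.re_add_im]
  rw [LinearMap.mem_ker, LinearMap.mem_ker, LinearMap.mem_ker, mulVecLin_apply,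
    mulVecLin_apply, mulVecLin_apply]
  constructor
  · intro h
    rw [hz, mulVec_map_ofReal] at h
    have h' : ∀ i, (A.mulVec (fun i => (z i).re)) i = 0 ∧ (A.mulVec (fun i => (z i).im)) i = 0 := by
      intro i; simpa [Complex.ext_iff] using congrFun h i
    exact ⟨funext fun i => (h' i).1, funext fun i => (h' i).2⟩
  · rintro ⟨h1, h2⟩
    rw [hz, mulVec_map_ofReal, h1, h2]
    funext i; simp

noncomputable def kerEquivAux {n : ℕ} (A : Matrix (Fin n) (Fin n) ℝ) :
    LinearMap.ker (A.map Complex.ofReal).mulVecLin ≃ₗ[ℝ]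
      (LinearMap.ker A.mulVecLin × LinearMap.ker A.mulVecLin) where
  toFun z := (⟨fun i => (z.1 i).re, ((ker_mem_iff A z.1).mp z.2).1⟩,
              ⟨fun i => (z.1 i).im, ((ker_mem_iff A z.1).mp z.2).2⟩)
  map_add' z w := by
    ext i <;> simp
  map_smul' r z := by
    ext i <;> simp
  invFun p := ⟨fun i => ((p.1.1 i : ℝ) : ℂ) + ((p.2.1 i : ℝ) : ℂ) * Complex.I,
    (ker_mem_iff A _).mpr (by simpa using ⟨p.1.2, p.2.2⟩)⟩
  left_inv z := by
    ext i; simp [Complex.re_add_im]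
  right_inv p := by
    ext i <;> simp

lemma rank_map_ofReal {n : ℕ} (A : Matrix (Fin n) (Fin n) ℝ) :
    (A.map Complex.ofReal).rank = A.rank := by
  have h1 := LinearMap.finrank_range_add_finrank_ker (A.map Complex.ofReal).mulVecLin
  have h2 := LinearMap.finrank_range_add_finrank_ker A.mulVecLin
  rw [finrank_pi] at h1 h2
  have h3 : finrank ℝ (LinearMap.ker (A.map Complex.ofReal).mulVecLin) =
      2 * finrank ℝ (LinearMap.ker A.mulVecLin) := by
    rw [(kerEquivAux A).finrank_eq, finrank_prod]; ring
  have h4 : finrank ℝ ℂ * finrank ℂ (LinearMap.ker (A.map Complex.ofReal).mulVecLin) =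
      finrank ℝ (LinearMap.ker (A.map Complex.ofReal).mulVecLin) :=
    Module.finrank_mul_finrank ℝ ℂ _
  rw [Complex.finrank_real_complex] at h4
  have : (A.map Complex.ofReal).rank = finrank ℂ (LinearMap.range (A.map Complex.ofReal).mulVecLin) := rfl
  have hA : A.rank = finrank ℝ (LinearMap.range A.mulVecLin) := rfl
  omega

lemma charpoly_mulVecLin {n : ℕ} (B : Matrix (Fin n) (Fin n) ℂ) :
    B.mulVecLin.charpoly = B.charpoly := by
  have h : LinearMap.toMatrix (Pi.basisFun ℂ (Fin n)) (Pi.basisFun ℂ (Fin n)) B.mulVecLin = B := by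
    ext i j
    simp [LinearMap.toMatrix_apply, mulVec_single]
  conv_rhs => rw [← h]
  rw [LinearMap.charpoly_toMatrix]

/-- If the rank of the real matrix A equals the number of nonzero eigenvalues of A
counted with algebraic multiplicity, and all the nonzero eigenvalues are pairwise
distinct, then A is diagonalizable over ℂ. -/
theorem stmt_1 (n : ℕ) (A : Matrix (Fin n) (Fin n) ℝ)
    (hrank : A.rank =
      Multiset.card (((A.map Complex.ofReal).charpoly.roots).filter (· ≠ 0)))
    (hdistinct : (((A.map Complex.ofReal).charpoly.roots).filter (· ≠ 0)).Nodup) :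
    ∃ P : Matrix (Fin n) (Fin n) ℂ, IsUnit P ∧
      (P⁻¹ * A.map Complex.ofReal * P).IsDiag := by
  set B := A.map Complex.ofReal with hB
  set g := B.mulVecLin with hg
  set R := B.charpoly.roots with hR
  set R0 := R.filter (· ≠ 0) with hR0
  set k := Multiset.card R0 with hk
  set c0 := Multiset.card (R.filter (fun a => ¬ a ≠ 0)) with hc0
  have hchar : g.charpoly = B.charpoly := _root_.charpoly_mulVecLin B
  have hmonic : B.charpoly.Monic := B.charpoly_monic
  have hsplits : Splits B.charpoly := IsAlgClosed.splits _
  have hdeg : B.charpoly.natDegree = n := by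
    rw [Matrix.charpoly_natDegree_eq_dim, Fintype.card_fin]
  have hcard : Multiset.card R = n := by
    rw [hR, Polynomial.splits_iff_card_roots.mp hsplits, hdeg]
  have hcards : k + c0 = n := by
    rw [hk, hc0, ← hcard, hR0]
    rw [← Multiset.card_add, Multiset.filter_add_not]
  -- trailing degree
  have hnt : B.charpoly.natTrailingDegree = c0 := by
    rw [← Polynomial.rootMultiplicity_eq_natTrailingDegree', ← Polynomial.count_roots, ← hR,
      Multiset.count_eq_card_filter_eq, hc0]
    congr 1
    apply Multiset.filter_congr
    intro x _
    simp [eq_comm]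
  -- kernel = generalized eigenspace of 0
  have hrankB : B.rank = k := by rw [hB, rank_map_ofReal, hrank]
  have hkerg : finrank ℂ (LinearMap.ker g) = c0 := by
    have h1 := LinearMap.finrank_range_add_finrank_ker g
    rw [finrank_pi] at h1
    have h2 : B.rank = finrank ℂ (LinearMap.range g) := rfl
    have h3 : Fintype.card (Fin n) = n := Fintype.card_fin n
    omega
  have hker_max : LinearMap.ker g = Module.End.maxGenEigenspace g 0 := by
    apply Submodule.eq_of_le_of_finrank_le
    · intro x hx
      exact (Module.End.mem_maxGenEigenspace g 0 x).mpr ⟨1, by simpa using hx⟩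
    · rw [LinearMap.finrank_maxGenEigenspace_zero_eq, hchar, hnt, hkerg]
  -- Cayley-Hamilton factorization
  have hfact : B.charpoly = X ^ c0 * (R0.map (fun a => X - C a)).prod := by
    conv_lhs => rw [hsplits.eq_prod_roots_of_monic hmonic, ← hR,
      ← Multiset.filter_add_not (fun a => ¬ a ≠ 0) R]
    rw [Multiset.map_add, Multiset.prod_add]
    congr 1
    · have : Multiset.map (fun a => X - C a) (Multiset.filter (fun a => ¬a ≠ 0) R)
          = Multiset.replicate c0 (X : ℂ[X]) := by
        rw [Multiset.eq_replicate]
        refine ⟨by rw [Multiset.card_map, hc0], ?_⟩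
        intro x hx
        obtain ⟨a, ha, rfl⟩ := Multiset.mem_map.mp hx
        have ha0 : a = 0 := by have := (Multiset.mem_filter.mp ha).2; tauto
        rw [ha0, map_zero, sub_zero]
      rw [this, Multiset.prod_replicate]
    · have : Multiset.filter (fun a => ¬¬a ≠ 0) R = R0 := by
        rw [hR0]
        apply Multiset.filter_congr
        intro x _
        tauto
      rw [this]
  -- semisimplicity
  set q := (R0.map (fun a => X - C a)).prod with hq
  have haeval : aeval g (X * q) = 0 := by
    have hCH : aeval g g.charpoly = 0 := g.aeval_self_charpoly
    rw [hchar, hfact, _root_.map_mul, map_pow, aeval_X] at hCH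
    rw [_root_.map_mul, aeval_X]
    apply LinearMap.ext; intro v
    have h1 : (g ^ c0) (aeval g q v) = 0 := by
      have := LinearMap.ext_iff.mp hCH v
      rwa [Module.End.mul_apply] at this
    have h2 : aeval g q v ∈ Module.End.maxGenEigenspace g 0 :=
      (Module.End.mem_maxGenEigenspace g 0 _).mpr ⟨c0, by simpa using h1⟩
    rw [← hker_max, LinearMap.mem_ker] at h2
    rw [Module.End.mul_apply]
    exact h2
  have hXq : X * q = ((0 ::ₘ R0).map (fun a => X - C a)).prod := by
    rw [Multiset.map_cons, Multiset.prod_cons, map_zero, sub_zero, hq]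
  have hnodup : (0 ::ₘ R0).Nodup := by
    refine Multiset.nodup_cons.mpr ⟨?_, hdistinct⟩
    intro h0
    exact (Multiset.mem_filter.mp h0).2 rfl
  have hsq : Squarefree (X * q) := by
    rw [hXq]
    have hm : (((0 ::ₘ R0).map (fun a => X - C a)).prod).Monic :=
      Polynomial.monic_multiset_prod_of_monic _ _ (fun a _ => monic_X_sub_C a)
    refine Polynomial.Separable.squarefree ?_
    refine (Polynomial.nodup_roots_iff_of_splits hm.ne_zero (IsAlgClosed.splits _)).mp ?_
    rw [Polynomial.roots_multiset_prod_X_sub_C]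
    exact hnodup
  have hss : Module.End.IsSemisimple g :=
    Module.End.isSemisimple_of_squarefree_aeval_eq_zero hsq haeval
  have htop : ⨆ μ : ℂ, Module.End.eigenspace g μ = ⊤ := by
    have h := Module.End.iSup_maxGenEigenspace_eq_top g
    simp_rw [hss.isFinitelySemisimple.maxGenEigenspace_eq_eigenspace] at h
    exact h
  have internal : DirectSum.IsInternal (fun μ : ℂ => Module.End.eigenspace g μ) :=
    (DirectSum.isInternal_submodule_iff_iSupIndep_and_iSup_eq_top _).mpr
      ⟨Module.End.eigenspaces_iSupIndep g, htop⟩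
  -- build eigenbasis
  let v : ∀ μ : ℂ, Basis (Fin (finrank ℂ (Module.End.eigenspace g μ))) ℂ
      (Module.End.eigenspace g μ) := fun μ => Module.finBasis ℂ _
  let b0 := internal.collectedBasis v
  let e := b0.indexEquiv (Pi.basisFun ℂ (Fin n))
  let b := b0.reindex e
  let d : Fin n → ℂ := fun i => (e.symm i).1
  have hb : ∀ i, g (b i) = d i • b i := by
    intro i
    have hmem : b i ∈ Module.End.eigenspace g (d i) := by
      rw [Module.Basis.reindex_apply]
      exact internal.collectedBasis_mem v _
    exact Module.End.mem_eigenspace_iff.mp hmem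
  let P := (Pi.basisFun ℂ (Fin n)).toMatrix ⇑b
  have hinv : Invertible P := (Pi.basisFun ℂ (Fin n)).invertibleToMatrix b
  refine ⟨P, isUnit_of_invertible P, ?_⟩
  have hPentry : ∀ i j, P i j = b j i := by
    intro i j
    simp [P, Basis.toMatrix_apply]
  have hBP : B * P = P * Matrix.diagonal d := by
    ext i j
    have h1 : (B * P) i j = g (b j) i := by
      simp only [Matrix.mul_apply, hPentry, hg, mulVecLin_apply, mulVec, dotProduct]
    rw [h1, hb j]
    rw [Matrix.mul_diagonal, hPentry, Pi.smul_apply, smul_eq_mul, mul_comm]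
  have hfinal : P⁻¹ * B * P = Matrix.diagonal d := by
    rw [Matrix.mul_assoc, hBP, ← Matrix.mul_assoc, Matrix.inv_mul_of_invertible,
      Matrix.one_mul]
  rw [hfinal]
  exact Matrix.isDiag_diagonal d
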